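/- Fix a positive integer T that is a perfect square. Let (Xᵢ)_{i≥1} be independent geometric random variables on the positive integers where Xᵢ has success probability 1/i (so E[Xᵢ] = i). Let A be the minimal n such that X₁ + ⋯ + Xₙ ≥ T. Then E[A] ≤ 2√T. -/

import Mathlib

open MeasureTheory ProbabilityTheory

noncomputable def geomG (p : ℝ) : ℕ → ℕ → ℝ
  | 0, _ => 1
  | (j+1), t => ∑ k ∈ Finset.Icc 1 t, (1-p)^(k-1) * p * geomG p j (t-k)

lemma geomG_zero (p : ℝ) (t : ℕ) : geomG p 0 t = 1 := rfl

lemma geomG_succ (p : ℝ) (j t : ℕ) :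
    geomG p (j+1) t = ∑ k ∈ Finset.Icc 1 t, (1-p)^(k-1) * p * geomG p j (t-k) := rfl



lemma geomG_nonneg {p : ℝ} (hp0 : 0 ≤ p) (hp1 : p ≤ 1) : ∀ j t, 0 ≤ geomG p j t := by
  intro j
  induction j with
  | zero => intro t; simp [geomG_zero]
  | succ j ih =>
    intro t
    rw [geomG_succ]
    refine Finset.sum_nonneg fun k _ => ?_
    have : (0:ℝ) ≤ (1-p)^(k-1) := pow_nonneg (by linarith) _
    have := ih (t - k)
    positivity

lemma geom_sum_Icc (p : ℝ) : ∀ t : ℕ, ∑ k ∈ Finset.Icc 1 t, (1-p)^(k-1) * p = 1 - (1-p)^t := by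
  intro t
  induction t with
  | zero => simp
  | succ t ih =>
    rw [Finset.sum_Icc_succ_top (by omega), ih, pow_succ]
    simp only [Nat.add_sub_cancel]
    ring

lemma geom_first (p : ℝ) :
    ∀ t : ℕ, p * (∑ k ∈ Finset.Icc 1 t, ((t:ℝ) - k) * ((1-p)^(k-1) * p))
      = p * t - (1 - (1-p)^t) := by
  intro t
  induction t with
  | zero => simp
  | succ t ih =>
    have hstep : ∑ k ∈ Finset.Icc 1 (t+1), (((t:ℝ)+1) - k) * ((1-p)^(k-1) * p)
        = (∑ k ∈ Finset.Icc 1 t, ((t:ℝ) - k) * ((1-p)^(k-1) * p))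
          + ∑ k ∈ Finset.Icc 1 t, (1-p)^(k-1) * p := by
      have h1 : ∑ k ∈ Finset.Icc 1 (t+1), (((t:ℝ)+1) - k) * ((1-p)^(k-1) * p)
          = ∑ k ∈ Finset.Icc 1 t, (((t:ℝ)+1) - k) * ((1-p)^(k-1) * p) := by
        rw [Finset.sum_Icc_succ_top (by omega)]
        push_cast
        simp
      rw [h1, ← Finset.sum_add_distrib]
      exact Finset.sum_congr rfl fun k _ => by ring
    push_cast
    rw [hstep, geom_sum_Icc, pow_succ, mul_add]
    linear_combination ih

lemma geomG_sum_le {p : ℝ} (hp0 : 0 < p) (hp1 : p ≤ 1) :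
    ∀ t : ℕ, ∀ J : ℕ, ∑ j ∈ Finset.Icc 1 J, geomG p j t ≤ (t:ℝ) * p := by
  intro t
  induction t using Nat.strong_induction_on with
  | _ t IH =>
    intro J
    have htp : (0:ℝ) ≤ (t:ℝ) * p := by positivity
    match J with
    | 0 => simpa using htp
    | (J'+1) =>
      have h1 : ∑ j ∈ Finset.Icc 1 (J'+1), geomG p j t
          = ∑ i ∈ Finset.range (J'+1), geomG p (i+1) t := by
        rw [Finset.range_eq_Ico]
        rw [Finset.sum_Ico_eq_sum_range]
        simp only [Nat.sub_zero]
        rw [show Finset.Icc 1 (J'+1) = Finset.Ico 1 (J'+2) by rw [← Finset.Ico_add_one_right_eq_Icc]; rfl]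
        rw [Finset.sum_Ico_eq_sum_range]
        simp [add_comm]
      rw [h1]
      have h2 : ∑ i ∈ Finset.range (J'+1), geomG p (i+1) t
          = ∑ k ∈ Finset.Icc 1 t, ∑ i ∈ Finset.range (J'+1), (1-p)^(k-1) * p * geomG p i (t-k) := by
        rw [Finset.sum_congr rfl (fun i _ => geomG_succ p i t)]
        rw [Finset.sum_comm]
      rw [h2]
      have h3 : ∀ k ∈ Finset.Icc 1 t,
          ∑ i ∈ Finset.range (J'+1), (1-p)^(k-1) * p * geomG p i (t-k)
            ≤ (1-p)^(k-1) * p * (1 + ((t:ℝ) - k) * p) := by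
        intro k hk
        rw [Finset.mem_Icc] at hk
        rw [← Finset.mul_sum]
        have hinner : ∑ i ∈ Finset.range (J'+1), geomG p i (t-k)
            ≤ 1 + ((t - k : ℕ):ℝ) * p := by
          rw [Finset.sum_range_succ']
          have heq : ∑ i ∈ Finset.range J', geomG p (i+1) (t-k)
              = ∑ j ∈ Finset.Icc 1 J', geomG p j (t-k) := by
            rw [show Finset.Icc 1 J' = Finset.Ico 1 (J'+1) by rw [Finset.Ico_add_one_right_eq_Icc]]
            rw [Finset.sum_Ico_eq_sum_range]
            simp [add_comm]
          rw [heq, geomG_zero]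
          have := IH (t-k) (by omega) J'
          linarith
        have hcast : ((t - k : ℕ):ℝ) = (t:ℝ) - k := by
          have : k ≤ t := hk.2
          push_cast [this]
          ring
        rw [hcast] at hinner
        have hw : (0:ℝ) ≤ (1-p)^(k-1) * p := by
          have : (0:ℝ) ≤ (1-p)^(k-1) := pow_nonneg (by linarith) _
          positivity
        exact mul_le_mul_of_nonneg_left hinner hw
      calc ∑ k ∈ Finset.Icc 1 t, ∑ i ∈ Finset.range (J'+1), (1-p)^(k-1) * p * geomG p i (t-k)
          ≤ ∑ k ∈ Finset.Icc 1 t, (1-p)^(k-1) * p * (1 + ((t:ℝ) - k) * p) :=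
            Finset.sum_le_sum h3
        _ = (∑ k ∈ Finset.Icc 1 t, (1-p)^(k-1) * p)
            + p * (∑ k ∈ Finset.Icc 1 t, ((t:ℝ) - k) * ((1-p)^(k-1) * p)) := by
            rw [Finset.mul_sum, ← Finset.sum_add_distrib]
            exact Finset.sum_congr rfl fun k _ => by ring
        _ = (t:ℝ) * p := by rw [geom_sum_Icc, geom_first]; ring


section Meas
variable {Ω : Type*} [MeasurableSpace Ω] (μ : Measure Ω) [IsProbabilityMeasure μ]

omit [IsProbabilityMeasure μ] in
lemma nat_cdf_sum (Z : Ω → ℕ) (hZ : Measurable Z) (u : ℕ) :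
    μ {ω | Z ω ≤ u} = ∑ v ∈ Finset.range (u+1), μ {ω | Z ω = v} := by
  have hset : {ω | Z ω ≤ u} = ⋃ v ∈ Finset.range (u+1), {ω | Z ω = v} := by
    ext ω
    simp only [Set.mem_setOf_eq, Set.mem_iUnion, Finset.mem_range]
    constructor
    · intro h; exact ⟨Z ω, by omega, rfl⟩
    · rintro ⟨v, hv, h⟩; omega
  rw [hset, measure_biUnion_finset]
  · intro a _ b _ hab
    simp only [Function.onFun, Set.disjoint_left, Set.mem_setOf_eq]
    intro ω h1 h2
    exact hab (h1 ▸ h2 ▸ rfl)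
  · intro v _
    exact hZ (measurableSet_singleton v)

lemma nat_cdf_sum_toReal (Z : Ω → ℕ) (hZ : Measurable Z) (u : ℕ) :
    (μ {ω | Z ω ≤ u}).toReal = ∑ v ∈ Finset.range (u+1), (μ {ω | Z ω = v}).toReal := by
  rw [nat_cdf_sum μ Z hZ u, ENNReal.toReal_sum (fun v _ => measure_ne_top μ _)]


omit [IsProbabilityMeasure μ] in
lemma nat_partition (Z : Ω → ℕ) (hZ : Measurable Z) :
    (μ Set.univ : ENNReal) = ∑' v : ℕ, μ {ω | Z ω = v} := by
  have hset : (Set.univ : Set Ω) = ⋃ v : ℕ, {ω | Z ω = v} := by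
    ext ω; simp
  rw [hset, measure_iUnion]
  · intro a b hab
    simp only [Set.disjoint_left, Set.mem_setOf_eq]
    intro ω h1 h2
    exact hab (h1 ▸ h2 ▸ rfl)
  · intro v
    exact hZ (measurableSet_singleton v)

lemma geom_zero (Y : Ω → ℕ) (hY : Measurable Y) (i : ℕ) (hi : 1 ≤ i)
    (h : ∀ k, 1 ≤ k → μ {ω | Y ω = k}
      = ENNReal.ofReal ((1 - 1/(i:ℝ))^(k-1) * (1/(i:ℝ)))) :
    μ {ω | Y ω = 0} = 0 := by
  have hpart : (1 : ENNReal) = ∑' v : ℕ, μ {ω | Y ω = v} := by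
    rw [← measure_univ (μ := μ)]; exact nat_partition μ Y hY
  have hi' : (1:ℝ) ≤ (i:ℝ) := by exact_mod_cast hi
  have hipos : (0:ℝ) < (i:ℝ) := by linarith
  have hq0 : (0:ℝ) ≤ 1 - 1/(i:ℝ) := by
    have : 1/(i:ℝ) ≤ 1 := by
      rw [div_le_one hipos]; exact hi'
    linarith
  have hq1 : 1 - 1/(i:ℝ) < 1 := by
    have : (0:ℝ) < 1/(i:ℝ) := by positivity
    linarith
  have hsummable : Summable (fun k : ℕ => (1 - 1/(i:ℝ))^k * (1/(i:ℝ))) :=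
    (summable_geometric_of_lt_one hq0 hq1).mul_right _
  have htsum : ∑' k : ℕ, (1 - 1/(i:ℝ))^k * (1/(i:ℝ)) = 1 := by
    rw [tsum_mul_right, tsum_geometric_of_lt_one hq0 hq1]
    have h2 : 1 - (1 - 1/(i:ℝ)) = 1/(i:ℝ) := by ring
    rw [h2]
    field_simp
  rw [tsum_eq_zero_add' ENNReal.summable] at hpart
  have htail : ∑' k : ℕ, μ {ω | Y ω = k + 1}
      = ENNReal.ofReal (∑' k : ℕ, (1 - 1/(i:ℝ))^k * (1/(i:ℝ))) := by
    rw [ENNReal.ofReal_tsum_of_nonneg (fun k => by positivity) hsummable]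
    refine tsum_congr fun k => ?_
    rw [h (k+1) (by omega)]
    simp
  rw [htail, htsum] at hpart
  simp only [ENNReal.ofReal_one] at hpart
  have h3 : (1:ENNReal) + μ {ω | Y ω = 0} = 1 + 0 := by
    rw [add_zero, add_comm]; exact hpart.symm
  exact (ENNReal.add_right_inj (by simp)).mp h3

lemma geom_cdf (Y : Ω → ℕ) (hY : Measurable Y) (i : ℕ) (hi : 1 ≤ i)
    (h : ∀ k, 1 ≤ k → μ {ω | Y ω = k}
      = ENNReal.ofReal ((1 - 1/(i:ℝ))^(k-1) * (1/(i:ℝ)))) (u : ℕ) :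
    (μ {ω | Y ω ≤ u}).toReal = 1 - (1 - 1/(i:ℝ))^u := by
  have hi' : (1:ℝ) ≤ (i:ℝ) := by exact_mod_cast hi
  have hq0 : (0:ℝ) ≤ 1 - 1/(i:ℝ) := by
    have : 1/(i:ℝ) ≤ 1 := by rw [div_le_one (by linarith)]; exact hi'
    linarith
  have hins : Finset.range (u+1) = insert 0 (Finset.Icc 1 u) := by
    ext n; simp [Finset.mem_range, Finset.mem_Icc]; omega
  rw [nat_cdf_sum μ Y hY u, hins, Finset.sum_insert (by simp),
    geom_zero μ Y hY i hi h, zero_add]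
  have hterm : ∀ v ∈ Finset.Icc 1 u, μ {ω | Y ω = v}
      = ENNReal.ofReal ((1 - 1/(i:ℝ))^(v-1) * (1/(i:ℝ))) := by
    intro v hv
    rw [Finset.mem_Icc] at hv
    exact h v hv.1
  rw [Finset.sum_congr rfl hterm,
    ← ENNReal.ofReal_sum_of_nonneg (fun v _ => by positivity),
    ENNReal.toReal_ofReal (Finset.sum_nonneg fun v _ => by positivity),
    geom_sum_Icc (1/(i:ℝ)) u]

lemma dom_lemma (m : ℕ) (hm : 1 ≤ m) (X : ℕ → Ω → ℕ)
    (hmeas : ∀ i, Measurable (X i))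
    (hindep : iIndepFun X μ)
    (hcdf : ∀ i, 1 ≤ i → ∀ u, (μ {ω | X i ω ≤ u}).toReal = 1 - (1 - 1/(i:ℝ))^u) :
    ∀ (s : Finset ℕ), (∀ a ∈ s, m ≤ a) → ∀ t : ℕ,
      (μ {ω | ∑ i ∈ s, X i ω ≤ t}).toReal ≤ geomG (1/(m:ℝ)) s.card t := by
  classical
  have hm' : (1:ℝ) ≤ (m:ℝ) := by exact_mod_cast hm
  have hmpos : (0:ℝ) < (m:ℝ) := by linarith
  have hp0 : (0:ℝ) < 1/(m:ℝ) := by positivity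
  have hp1 : 1/(m:ℝ) ≤ 1 := by rw [div_le_one hmpos]; exact hm'
  have hq0 : (0:ℝ) ≤ 1 - 1/(m:ℝ) := by linarith
  intro s
  induction s using Finset.induction_on with
  | empty =>
    intro _ t
    have huniv : {ω : Ω | ∑ i ∈ (∅ : Finset ℕ), X i ω ≤ t} = Set.univ := by
      ext ω; simp
    rw [huniv, measure_univ]
    simp [geomG_zero]
  | @insert a s ha ih =>
    intro hmem t
    have hma : m ≤ a := hmem a (Finset.mem_insert_self a s)
    have ha1 : 1 ≤ a := le_trans hm hma
    have hWmeas : Measurable (fun ω => ∑ i ∈ s, X i ω) :=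
      Finset.measurable_sum s (fun i _ => hmeas i)
    have hindepWa : IndepFun (fun ω => ∑ i ∈ s, X i ω) (X a) μ := by
      have h1 := hindep.indepFun_finsetSum_of_notMem hmeas ha
      have hfun : (∑ j ∈ s, X j) = fun ω => ∑ i ∈ s, X i ω := by
        funext ω; simp [Finset.sum_apply]
      rwa [hfun] at h1
    have hset : {ω | ∑ i ∈ insert a s, X i ω ≤ t}
        = ⋃ v ∈ Finset.range (t+1),
            ({ω | (∑ i ∈ s, X i ω) = v} ∩ {ω | X a ω ≤ t - v}) := by
      ext ω
      simp only [Set.mem_setOf_eq, Set.mem_iUnion, Set.mem_inter_iff, Finset.mem_range,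
        Finset.sum_insert ha]
      constructor
      · intro hle
        exact ⟨∑ i ∈ s, X i ω, by omega, rfl, by omega⟩
      · rintro ⟨v, hv, h1, h2⟩; omega
    have hprod : ∀ v : ℕ, μ ({ω | (∑ i ∈ s, X i ω) = v} ∩ {ω | X a ω ≤ t - v})
        = μ {ω | (∑ i ∈ s, X i ω) = v} * μ {ω | X a ω ≤ t - v} := by
      intro v
      have h2 := hindepWa.measure_inter_preimage_eq_mul {v} (Set.Iic (t-v))
        (measurableSet_singleton v) measurableSet_Iic
      simpa only [Set.preimage, Set.mem_singleton_iff, Set.mem_Iic] using h2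
    have hmeq : μ {ω | ∑ i ∈ insert a s, X i ω ≤ t}
        = ∑ v ∈ Finset.range (t+1),
            μ {ω | (∑ i ∈ s, X i ω) = v} * μ {ω | X a ω ≤ t - v} := by
      rw [hset, measure_biUnion_finset]
      · exact Finset.sum_congr rfl fun v _ => hprod v
      · intro v1 _ v2 _ hne
        simp only [Function.onFun, Set.disjoint_left, Set.mem_inter_iff, Set.mem_setOf_eq]
        rintro ω ⟨h1, _⟩ ⟨h2, _⟩
        exact hne (h1 ▸ h2 ▸ rfl)
      · intro v _
        exact (hWmeas (measurableSet_singleton v)).inter (hmeas a measurableSet_Iic)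
    have htoReal : (μ {ω | ∑ i ∈ insert a s, X i ω ≤ t}).toReal
        = ∑ v ∈ Finset.range (t+1),
            (μ {ω | (∑ i ∈ s, X i ω) = v}).toReal * (μ {ω | X a ω ≤ t - v}).toReal := by
      rw [hmeq, ENNReal.toReal_sum (fun v _ => by
        exact ENNReal.mul_ne_top (measure_ne_top μ _) (measure_ne_top μ _))]
      exact Finset.sum_congr rfl fun v _ => ENNReal.toReal_mul
    rw [htoReal]
    -- bound each CDF factor by the Geo(1/m) CDF
    have hcdfbound : ∀ u : ℕ, (μ {ω | X a ω ≤ u}).toReal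
        ≤ ∑ k ∈ Finset.Icc 1 u, (1 - 1/(m:ℝ))^(k-1) * (1/(m:ℝ)) := by
      intro u
      rw [hcdf a ha1 u, geom_sum_Icc (1/(m:ℝ)) u]
      have hle : 1 - 1/(m:ℝ) ≤ 1 - 1/(a:ℝ) := by
        have ha' : (0:ℝ) < (a:ℝ) := by
          have : (1:ℝ) ≤ (a:ℝ) := by exact_mod_cast ha1
          linarith
        have : 1/(a:ℝ) ≤ 1/(m:ℝ) := by
          apply one_div_le_one_div_of_le hmpos
          exact_mod_cast hma
        linarith
      have := pow_le_pow_left₀ hq0 hle u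
      linarith
    have hstep1 : ∑ v ∈ Finset.range (t+1),
        (μ {ω | (∑ i ∈ s, X i ω) = v}).toReal * (μ {ω | X a ω ≤ t - v}).toReal
        ≤ ∑ v ∈ Finset.range (t+1), ∑ k ∈ Finset.Icc 1 (t-v),
            (μ {ω | (∑ i ∈ s, X i ω) = v}).toReal * ((1 - 1/(m:ℝ))^(k-1) * (1/(m:ℝ))) := by
      refine Finset.sum_le_sum fun v _ => ?_
      rw [← Finset.mul_sum]
      exact mul_le_mul_of_nonneg_left (hcdfbound (t-v)) ENNReal.toReal_nonneg
    have hswap : ∑ v ∈ Finset.range (t+1), ∑ k ∈ Finset.Icc 1 (t-v),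
            (μ {ω | (∑ i ∈ s, X i ω) = v}).toReal * ((1 - 1/(m:ℝ))^(k-1) * (1/(m:ℝ)))
        = ∑ k ∈ Finset.Icc 1 t, ∑ v ∈ Finset.range (t-k+1),
            (μ {ω | (∑ i ∈ s, X i ω) = v}).toReal * ((1 - 1/(m:ℝ))^(k-1) * (1/(m:ℝ))) := by
      refine Finset.sum_comm' fun v k => ?_
      simp only [Finset.mem_range, Finset.mem_Icc]
      omega
    have hstep2 : ∑ k ∈ Finset.Icc 1 t, ∑ v ∈ Finset.range (t-k+1),
            (μ {ω | (∑ i ∈ s, X i ω) = v}).toReal * ((1 - 1/(m:ℝ))^(k-1) * (1/(m:ℝ)))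
        = ∑ k ∈ Finset.Icc 1 t, (1 - 1/(m:ℝ))^(k-1) * (1/(m:ℝ))
            * (μ {ω | (∑ i ∈ s, X i ω) ≤ t - k}).toReal := by
      refine Finset.sum_congr rfl fun k _ => ?_
      rw [nat_cdf_sum_toReal μ _ hWmeas (t-k), Finset.mul_sum, ← Finset.sum_mul]
      rw [Finset.sum_mul]
      exact Finset.sum_congr rfl fun v _ => by ring
    have hstep3 : ∑ k ∈ Finset.Icc 1 t, (1 - 1/(m:ℝ))^(k-1) * (1/(m:ℝ))
            * (μ {ω | (∑ i ∈ s, X i ω) ≤ t - k}).toReal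
        ≤ geomG (1/(m:ℝ)) (insert a s).card t := by
      rw [Finset.card_insert_of_notMem ha, geomG_succ]
      refine Finset.sum_le_sum fun k _ => ?_
      have hw : (0:ℝ) ≤ (1 - 1/(m:ℝ))^(k-1) * (1/(m:ℝ)) := by
        have : (0:ℝ) ≤ (1 - 1/(m:ℝ))^(k-1) := pow_nonneg hq0 _
        positivity
      exact mul_le_mul_of_nonneg_left
        (ih (fun b hb => hmem b (Finset.mem_insert_of_mem hb)) (t-k)) hw
    calc _ ≤ _ := hstep1
      _ = _ := hswap
      _ = _ := hstep2
      _ ≤ _ := hstep3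
end Meas

/-- For a perfect-square threshold `T = m²`, if `X i ∼ Geo(1/i)` are
independent geometric variables on the positive integers (so `E[X i] = i`) and `A`
is the first `n` with `X 1 + ⋯ + X n ≥ T`, then `E[A] ≤ 2√T`. -/
theorem precision_single_counter_recirculation_bound
    {Ω : Type*} [MeasurableSpace Ω] (μ : Measure Ω) [IsProbabilityMeasure μ]
    (m : ℕ) (hm : 1 ≤ m) (T : ℕ) (hT : T = m ^ 2)
    (X : ℕ → Ω → ℕ)
    (hmeas : ∀ i, Measurable (X i))
    (hindep : iIndepFun X μ)
    (hgeom : ∀ i, 1 ≤ i → ∀ k, 1 ≤ k →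
      μ {ω | X i ω = k} =
        ENNReal.ofReal ((1 - 1 / (i : ℝ)) ^ (k - 1) * (1 / (i : ℝ))))
    (A : Ω → ℕ)
    (hA : ∀ ω, A ω = sInf {n : ℕ | T ≤ ∑ i ∈ Finset.Icc 1 n, X i ω}) :
    ∫ ω, (A ω : ℝ) ∂μ ≤ 2 * Real.sqrt T := by
  classical
  have hm' : (1:ℝ) ≤ (m:ℝ) := by exact_mod_cast hm
  have hmpos : (0:ℝ) < (m:ℝ) := by linarith
  have hp0 : (0:ℝ) < 1/(m:ℝ) := by positivity
  have hp1 : 1/(m:ℝ) ≤ 1 := by rw [div_le_one hmpos]; exact hm'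
  have hmT : m ≤ T := by rw [hT]; exact Nat.le_self_pow (by norm_num) m
  have hT1 : 1 ≤ T := le_trans hm hmT
  have hcdf : ∀ i, 1 ≤ i → ∀ u, (μ {ω | X i ω ≤ u}).toReal = 1 - (1 - 1/(i:ℝ))^u :=
    fun i hi u => geom_cdf μ (X i) (hmeas i) i hi (hgeom i hi) u
  have hzero : ∀ i, 1 ≤ i → μ {ω | X i ω = 0} = 0 :=
    fun i hi => geom_zero μ (X i) (hmeas i) i hi (hgeom i hi)
  -- the events
  set gset : ℕ → Set Ω := fun n => {ω | ∑ i ∈ Finset.Icc 1 n, X i ω < T} with hgset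
  have hgmeas : ∀ n, MeasurableSet (gset n) := by
    intro n
    have : Measurable (fun ω => ∑ i ∈ Finset.Icc 1 n, X i ω) :=
      Finset.measurable_sum _ (fun i _ => hmeas i)
    exact this measurableSet_Iio
  set g : Ω → ℝ := fun ω => ∑ n ∈ Finset.range T, (gset n).indicator (fun _ => (1:ℝ)) ω
    with hg
  have hgint : Integrable g μ :=
    integrable_finset_sum _ fun n _ => (integrable_const 1).indicator (hgmeas n)
  -- a.e. bound A ≤ g
  have hnull : μ (⋃ i ∈ Finset.Icc 1 T, {ω | X i ω = 0}) = 0 := by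
    refine le_antisymm ?_ zero_le
    refine le_trans (measure_biUnion_finset_le _ _) ?_
    refine le_of_eq (Finset.sum_eq_zero fun i hi => hzero i (Finset.mem_Icc.mp hi).1)
  have hbound : ∀ᵐ ω ∂μ, (A ω : ℝ) ≤ g ω := by
    filter_upwards [measure_eq_zero_iff_ae_notMem.mp hnull] with ω hω
    have hX1 : ∀ i ∈ Finset.Icc 1 T, 1 ≤ X i ω := by
      intro i hi
      by_contra hcon
      apply hω
      simp only [Set.mem_iUnion, Set.mem_setOf_eq]
      exact ⟨i, hi, by omega⟩
    have hTmem : T ≤ ∑ i ∈ Finset.Icc 1 T, X i ω := by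
      calc T = ∑ _i ∈ Finset.Icc 1 T, 1 := by
            rw [Finset.sum_const, smul_eq_mul, mul_one, Nat.card_Icc]; omega
        _ ≤ ∑ i ∈ Finset.Icc 1 T, X i ω := Finset.sum_le_sum hX1
    have hAle : A ω ≤ T := by
      rw [hA ω]
      exact Nat.sInf_le hTmem
    have hlt : ∀ n, n < A ω → ∑ i ∈ Finset.Icc 1 n, X i ω < T := by
      intro n hn
      by_contra hcon
      push_neg at hcon
      have h2 : sInf {n : ℕ | T ≤ ∑ i ∈ Finset.Icc 1 n, X i ω} ≤ n := Nat.sInf_le hcon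
      rw [hA ω] at hn
      omega
    have hcard : (A ω : ℝ) = ∑ n ∈ Finset.range T, (if n < A ω then (1:ℝ) else 0) := by
      rw [Finset.sum_boole]
      have : Finset.filter (fun n => n < A ω) (Finset.range T) = Finset.range (A ω) := by
        ext n
        simp only [Finset.mem_filter, Finset.mem_range]
        omega
      rw [this, Finset.card_range]
    rw [hcard, hg]
    refine Finset.sum_le_sum fun n _ => ?_
    by_cases hn : n < A ω
    · simp only [hn, if_true]
      have : ω ∈ gset n := hlt n hn
      rw [Set.indicator_of_mem this]
    · simp only [hn, if_false]
      exact Set.indicator_nonneg (fun _ _ => zero_le_one) ω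
  -- integral bound
  have hint : ∫ ω, (A ω : ℝ) ∂μ ≤ ∫ ω, g ω ∂μ :=
    integral_mono_of_nonneg (Filter.Eventually.of_forall fun ω => by positivity) hgint hbound
  have hgval : ∫ ω, g ω ∂μ = ∑ n ∈ Finset.range T, (μ (gset n)).toReal := by
    rw [hg]
    rw [integral_finset_sum _ fun n _ => (integrable_const 1).indicator (hgmeas n)]
    refine Finset.sum_congr rfl fun n _ => ?_
    rw [integral_indicator_const (1:ℝ) (hgmeas n)]
    simp
    rfl
  -- bound the sum of tail probabilities
  have hsplit := Finset.sum_filter_add_sum_filter_not (Finset.range T)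
    (fun n => n < m) (fun n => (μ (gset n)).toReal)
  have hS1 : ∑ n ∈ Finset.filter (fun n => n < m) (Finset.range T), (μ (gset n)).toReal
      ≤ (m:ℝ) := by
    calc ∑ n ∈ Finset.filter (fun n => n < m) (Finset.range T), (μ (gset n)).toReal
        ≤ ∑ _n ∈ Finset.filter (fun n => n < m) (Finset.range T), (1:ℝ) := by
          refine Finset.sum_le_sum fun n _ => ?_
          have h1 : μ (gset n) ≤ 1 := prob_le_one
          calc (μ (gset n)).toReal ≤ (1:ENNReal).toReal :=
              ENNReal.toReal_mono (by simp) h1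
            _ = 1 := by simp
      _ ≤ (m:ℝ) := by
          rw [Finset.sum_const, nsmul_eq_mul, mul_one]
          have : Finset.filter (fun n => n < m) (Finset.range T) ⊆ Finset.range m := by
            intro n hn
            simp only [Finset.mem_filter, Finset.mem_range] at hn ⊢
            exact hn.2
          have := Finset.card_le_card this
          rw [Finset.card_range] at this
          exact_mod_cast this
  have hS2 : ∑ n ∈ Finset.filter (fun n => ¬ n < m) (Finset.range T), (μ (gset n)).toReal
      ≤ ((T:ℝ) - 1) * (1/(m:ℝ)) := by
    have hfeq : Finset.filter (fun n => ¬ n < m) (Finset.range T) = Finset.Icc m (T-1) := by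
      ext n
      simp only [Finset.mem_filter, Finset.mem_range, Finset.mem_Icc, not_lt]
      omega
    rw [hfeq]
    have hterm : ∀ n ∈ Finset.Icc m (T-1),
        (μ (gset n)).toReal ≤ geomG (1/(m:ℝ)) (n - m + 1) (T-1) := by
      intro n hn
      rw [Finset.mem_Icc] at hn
      have hsub : gset n ⊆ {ω | ∑ i ∈ Finset.Icc m n, X i ω ≤ T - 1} := by
        intro ω hω
        simp only [hgset, Set.mem_setOf_eq] at hω ⊢
        have hle : ∑ i ∈ Finset.Icc m n, X i ω ≤ ∑ i ∈ Finset.Icc 1 n, X i ω :=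
          Finset.sum_le_sum_of_subset (Finset.Icc_subset_Icc (by omega) le_rfl)
        omega
      have h1 : (μ (gset n)).toReal ≤ (μ {ω | ∑ i ∈ Finset.Icc m n, X i ω ≤ T - 1}).toReal :=
        ENNReal.toReal_mono (measure_ne_top μ _) (measure_mono hsub)
      have h2 := dom_lemma μ m hm X hmeas hindep hcdf (Finset.Icc m n)
        (fun b hb => (Finset.mem_Icc.mp hb).1) (T-1)
      rw [Nat.card_Icc] at h2
      have h3 : n + 1 - m = n - m + 1 := by omega
      rw [h3] at h2
      exact le_trans h1 h2
    calc ∑ n ∈ Finset.Icc m (T-1), (μ (gset n)).toReal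
        ≤ ∑ n ∈ Finset.Icc m (T-1), geomG (1/(m:ℝ)) (n - m + 1) (T-1) :=
          Finset.sum_le_sum hterm
      _ = ∑ j ∈ Finset.Icc 1 (T-m), geomG (1/(m:ℝ)) j (T-1) := by
          refine Finset.sum_nbij' (fun n => n - m + 1) (fun j => j + m - 1) ?_ ?_ ?_ ?_ ?_
          · intro n hn
            rw [Finset.mem_Icc] at hn ⊢
            omega
          · intro j hj
            rw [Finset.mem_Icc] at hj ⊢
            omega
          · intro n hn
            rw [Finset.mem_Icc] at hn
            omega
          · intro j hj
            rw [Finset.mem_Icc] at hj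
            omega
          · intro n hn
            rfl
      _ ≤ ((T-1 : ℕ):ℝ) * (1/(m:ℝ)) := geomG_sum_le hp0 hp1 (T-1) (T-m)
      _ = ((T:ℝ) - 1) * (1/(m:ℝ)) := by
          congr 1
          push_cast [hT1]
          ring
  have hfinal : ∑ n ∈ Finset.range T, (μ (gset n)).toReal ≤ (m:ℝ) + ((T:ℝ) - 1) * (1/(m:ℝ)) := by
    rw [← hsplit]
    linarith
  have hsqrt : Real.sqrt T = (m:ℝ) := by
    rw [hT]
    push_cast
    exact Real.sqrt_sq (by positivity)
  have hnum : (m:ℝ) + ((T:ℝ) - 1) * (1/(m:ℝ)) ≤ 2 * (m:ℝ) := by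
    have hTval : (T:ℝ) = (m:ℝ)^2 := by rw [hT]; push_cast; ring
    rw [hTval]
    rw [div_eq_mul_inv, one_mul] at *
    have h0 : ((m:ℝ)^2 - 1) * (m:ℝ)⁻¹ ≤ (m:ℝ) := by
      rw [← div_eq_mul_inv, div_le_iff₀ hmpos]
      nlinarith
    linarith [h0]
  rw [hsqrt]
  calc ∫ ω, (A ω : ℝ) ∂μ ≤ ∫ ω, g ω ∂μ := hint
    _ = ∑ n ∈ Finset.range T, (μ (gset n)).toReal := hgval
    _ ≤ (m:ℝ) + ((T:ℝ) - 1) * (1/(m:ℝ)) := hfinal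
    _ ≤ 2 * (m:ℝ) := hnum
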